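/- arXiv:1310.8094 — 2 statements merged into one kernel-verified Lean document; each statement's English description precedes it below -/
import Mathlib

section
/- For ℓ = 1, 2 and for every bounded set R ⊆ ℂ₊ with inf_{z ∈ R} |Re z| > 0 (i.e. R lies at a positive distance from the imaginary axis), one has sup_{z ∈ R} ∫ t^ℓ/|1+δ̃(z)t|² dν(t) < ∞ and sup_{z ∈ R} ∫ t^ℓ/|1+δ(z)t|² dν̃(t) < ∞. -/
open MeasureTheory Set Filter Topology

noncomputable section

/-- The open upper half plane of `ℂ`. -/
def UpperHalf : Set ℂ := {z : ℂ | 0 < z.im}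

/-- `(d, dt)` is a solution in `ℂ₊ × ℂ₊` of the master system of equations at the point `z`. -/
def IsPair (ν νt : Measure ℝ) (c : ℝ) (z d dt : ℂ) : Prop :=
  d ∈ UpperHalf ∧ dt ∈ UpperHalf ∧
  d = (c : ℂ) * ∫ t, (t : ℂ) / (-z * (1 + dt * (t : ℂ))) ∂ν ∧
  dt = ∫ t, (t : ℂ) / (-z * (1 + d * (t : ℂ))) ∂νt

def Complex.abs : AbsoluteValue ℂ ℝ := IsAbsoluteValue.toAbsoluteValue (norm : ℂ → ℝ)

lemma Complex.norm_eq_abs (z : ℂ) : ‖z‖ = Complex.abs z := rfl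

lemma Complex.abs_ofReal (r : ℝ) : Complex.abs (r : ℂ) = |r| := by
  rw [← Complex.norm_eq_abs, Complex.norm_real, Real.norm_eq_abs]

lemma Complex.sq_abs (z : ℂ) : Complex.abs z ^ 2 = Complex.normSq z := Complex.sq_norm z

lemma Complex.abs_im_le_abs (z : ℂ) : |z.im| ≤ Complex.abs z := Complex.abs_im_le_norm z

lemma Complex.abs_re_le_abs (z : ℂ) : |z.re| ≤ Complex.abs z := Complex.abs_re_le_norm z

lemma Complex.continuous_abs : Continuous Complex.abs := continuous_norm

section Aux

variable {e z d : ℂ}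

lemma one_add_ne (he : 0 < e.im) (t : ℝ) : 1 + e * t ≠ 0 := by
  intro h
  rcases eq_or_ne t 0 with rfl | ht
  · simp at h
  · have h2 : (1 + e * t).im = e.im * t := by simp
    rw [h] at h2
    simp at h2
    rcases h2 with h1 | h2
    · exact absurd h1 (ne_of_gt he)
    · exact ht h2

lemma normSq_pos' (he : 0 < e.im) (t : ℝ) : 0 < Complex.normSq (1 + e * t) :=
  Complex.normSq_pos.2 (one_add_ne he t)

lemma normSq_ge_sq (e : ℂ) (t : ℝ) : (t * e.im)^2 ≤ Complex.normSq (1 + e * t) := by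
  have h : Complex.normSq (1 + e * t) = (1 + e.re * t)^2 + (e.im * t)^2 := by
    simp [Complex.normSq_apply]; ring
  nlinarith [sq_nonneg (1 + e.re * t)]

lemma normSq_ge_const (he : 0 < e.im) (t : ℝ) :
    e.im^2 / Complex.normSq e ≤ Complex.normSq (1 + e * t) := by
  have h : Complex.normSq (1 + e * t) = (1 + e.re * t)^2 + (e.im * t)^2 := by
    simp [Complex.normSq_apply]; ring
  have hne : Complex.normSq e = e.re^2 + e.im^2 := by simp [Complex.normSq_apply]; ring
  have hpos : 0 < e.re^2 + e.im^2 := by positivity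
  rw [h, hne, div_le_iff₀ hpos]
  nlinarith [sq_nonneg ((e.re^2 + e.im^2) * t + e.re)]

lemma abs_upper (e : ℂ) {t : ℝ} (ht : 0 ≤ t) : Complex.abs (1 + e * t) ≤ 1 + Complex.abs e * t := by
  calc Complex.abs (1 + e * t) ≤ Complex.abs 1 + Complex.abs (e * t) := Complex.abs.add_le _ _
  _ = 1 + Complex.abs e * |t| := by rw [map_one, map_mul, Complex.abs_ofReal]
  _ = 1 + Complex.abs e * t := by rw [abs_of_nonneg ht]

lemma abs_lower (e : ℂ) (t : ℝ) : 1 - Complex.abs e * |t| ≤ Complex.abs (1 + e * t) := by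
  have h := norm_sub_norm_le (1 : ℂ) (-(e * t))
  simp only [norm_neg, sub_neg_eq_add] at h
  calc 1 - Complex.abs e * |t|
      = ‖(1:ℂ)‖ - ‖e * (t:ℂ)‖ := by
        rw [norm_one, norm_mul, Complex.norm_real, Real.norm_eq_abs,
          Complex.norm_eq_abs]
  _ ≤ ‖1 + e * (t:ℂ)‖ := h
  _ = Complex.abs (1 + e * t) := Complex.norm_eq_abs _

lemma abs_ge_im (he : 0 ≤ e.im) (t : ℝ) : |t| * e.im ≤ Complex.abs (1 + e * t) := by
  have h1 : (1 + e * (t:ℂ)).im = e.im * t := by simp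
  calc |t| * e.im = |e.im * t| := by rw [abs_mul, abs_of_nonneg he]; ring
  _ = |(1 + e * (t:ℂ)).im| := by rw [h1]
  _ ≤ Complex.abs (1 + e * t) := Complex.abs_im_le_abs _

lemma cont_normSq (e : ℂ) : Continuous (fun t : ℝ => Complex.normSq (1 + e * (t:ℂ))) := by
  exact Complex.continuous_normSq.comp (by continuity)

lemma intgU (μ : Measure ℝ) [IsFiniteMeasure μ] (he : 0 < e.im) :
    Integrable (fun t : ℝ => t^2 / Complex.normSq (1 + e * (t:ℂ))) μ := by
  refine ⟨(Continuous.div (by continuity) (cont_normSq e)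
    (fun t => (normSq_pos' he t).ne')).aestronglyMeasurable, ?_⟩
  refine HasFiniteIntegral.of_bounded (C := (e.im^2)⁻¹) (Eventually.of_forall fun t => ?_)
  have hN := normSq_pos' he t
  have h := normSq_ge_sq e t
  rw [Real.norm_eq_abs, abs_of_nonneg (by positivity)]
  rw [div_le_iff₀ hN] at *
  rw [inv_mul_eq_div, le_div_iff₀ (by positivity)]
  nlinarith

lemma intgAbs (μ : Measure ℝ) [IsFiniteMeasure μ] (he : 0 < e.im) :
    Integrable (fun t : ℝ => |t| / Complex.normSq (1 + e * (t:ℂ))) μ := by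
  refine ⟨(Continuous.div (by continuity) (cont_normSq e)
    (fun t => (normSq_pos' he t).ne')).aestronglyMeasurable, ?_⟩
  refine HasFiniteIntegral.of_bounded (C := (Complex.normSq e + 1)/(2*e.im^2))
    (Eventually.of_forall fun t => ?_)
  have hN := normSq_pos' he t
  have h1 := normSq_ge_const he t
  have h2 := normSq_ge_sq e t
  have hse : 0 < Complex.normSq e := Complex.normSq_pos.2 (by
    intro h; rw [h] at he; simp at he)
  rw [Real.norm_eq_abs, abs_of_nonneg (by positivity), div_le_div_iff₀ hN (by positivity)]
  rw [div_le_iff₀ hse] at h1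
  nlinarith [sq_abs t, abs_nonneg t, sq_nonneg (|t| - 1)]

lemma intgT (μ : Measure ℝ) [IsFiniteMeasure μ] (he : 0 < e.im) :
    Integrable (fun t : ℝ => t / Complex.normSq (1 + e * (t:ℂ))) μ := by
  refine (intgAbs μ he).mono ?_ (Eventually.of_forall fun t => ?_)
  · exact (Continuous.div (by continuity) (cont_normSq e)
      (fun t => (normSq_pos' he t).ne')).aestronglyMeasurable
  · have hN := normSq_pos' he t
    simp [Real.norm_eq_abs, abs_div, abs_abs, abs_of_nonneg hN.le]

lemma intgC (μ : Measure ℝ) [IsFiniteMeasure μ] (he : 0 < e.im) :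
    Integrable (fun t : ℝ => (t:ℂ) / (1 + e * (t:ℂ))) μ := by
  refine ⟨(Continuous.div (by continuity) (by continuity)
    (fun t => one_add_ne he t)).aestronglyMeasurable, ?_⟩
  refine HasFiniteIntegral.of_bounded (C := (e.im)⁻¹) (Eventually.of_forall fun t => ?_)
  have h := abs_ge_im he.le t
  have habs : 0 < Complex.abs (1 + e * (t:ℂ)) := by
    rw [AbsoluteValue.pos_iff]; exact one_add_ne he t
  rw [norm_div, Complex.norm_real, Real.norm_eq_abs, Complex.norm_eq_abs,
    div_le_iff₀ habs, inv_mul_eq_div, le_div_iff₀ he]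
  linarith

lemma zd_eq (ν : Measure ℝ) (hz : 0 < z.im) (c₁ : ℝ)
    (heq : d = (c₁:ℂ) * ∫ t, (t:ℂ) / (-z * (1 + e * (t:ℂ))) ∂ν) :
    z * d = -(c₁:ℂ) * ∫ t, (t:ℂ) / (1 + e * (t:ℂ)) ∂ν := by
  have hz0 : z ≠ 0 := fun h => by simp [h] at hz
  have h1 : ∀ t : ℝ, (t:ℂ) / (-z * (1 + e * (t:ℂ))) = (-z)⁻¹ * ((t:ℂ) / (1 + e * (t:ℂ))) := by
    intro t; rw [div_mul_eq_div_div_swap, div_eq_inv_mul]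
  rw [show (fun t : ℝ => (t:ℂ) / (-z * (1 + e * (t:ℂ)))) = fun t : ℝ =>
    (-z)⁻¹ * ((t:ℂ) / (1 + e * (t:ℂ))) from funext h1] at heq
  rw [integral_const_mul] at heq
  rw [heq]
  rw [show (-z)⁻¹ = -z⁻¹ by field_simp]
  linear_combination (-(c₁:ℂ) * ∫ t, (t:ℂ) / (1 + e * (t:ℂ)) ∂ν) * mul_inv_cancel₀ hz0

lemma im_zd (ν : Measure ℝ) [IsFiniteMeasure ν] (hz : 0 < z.im) (he : 0 < e.im) (c₁ : ℝ)
    (heq : d = (c₁:ℂ) * ∫ t, (t:ℂ) / (-z * (1 + e * (t:ℂ))) ∂ν) :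
    (z * d).im = c₁ * e.im * ∫ t, t^2 / Complex.normSq (1 + e * (t:ℂ)) ∂ν := by
  rw [zd_eq ν hz c₁ heq]
  rw [Complex.mul_im]
  have him : (∫ t, (t:ℂ) / (1 + e * (t:ℂ)) ∂ν).im
      = ∫ t, (-(e.im)) * (t^2 / Complex.normSq (1 + e * (t:ℂ))) ∂ν := by
    rw [show (∫ t, (t:ℂ) / (1 + e * (t:ℂ)) ∂ν).im
        = RCLike.im (K := ℂ) (∫ t, (t:ℂ) / (1 + e * (t:ℂ)) ∂ν) from rfl,
      ← integral_im (intgC ν he)]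
    refine integral_congr_ae (Eventually.of_forall fun t => ?_)
    show ((t:ℂ) / (1 + e * (t:ℂ))).im = _
    rw [Complex.div_im]
    have h1 : ((t:ℂ)).im = 0 := by simp
    have h2 : ((t:ℂ)).re = t := by simp
    have h3 : (1 + e * (t:ℂ)).im = e.im * t := by simp
    rw [h1, h2, h3]
    ring
  rw [him, integral_const_mul]
  simp
  ring

lemma re_zd (ν : Measure ℝ) [IsFiniteMeasure ν] (hz : 0 < z.im) (he : 0 < e.im) (c₁ : ℝ)
    (heq : d = (c₁:ℂ) * ∫ t, (t:ℂ) / (-z * (1 + e * (t:ℂ))) ∂ν) :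
    (z * d).re = -(c₁) * ((∫ t, t / Complex.normSq (1 + e * (t:ℂ)) ∂ν)
      + e.re * ∫ t, t^2 / Complex.normSq (1 + e * (t:ℂ)) ∂ν) := by
  rw [zd_eq ν hz c₁ heq]
  rw [Complex.mul_re]
  have hre : (∫ t, (t:ℂ) / (1 + e * (t:ℂ)) ∂ν).re
      = ∫ t, (t / Complex.normSq (1 + e * (t:ℂ))
          + e.re * (t^2 / Complex.normSq (1 + e * (t:ℂ)))) ∂ν := by
    rw [show (∫ t, (t:ℂ) / (1 + e * (t:ℂ)) ∂ν).re
        = RCLike.re (K := ℂ) (∫ t, (t:ℂ) / (1 + e * (t:ℂ)) ∂ν) from rfl,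
      ← integral_re (intgC ν he)]
    refine integral_congr_ae (Eventually.of_forall fun t => ?_)
    show ((t:ℂ) / (1 + e * (t:ℂ))).re = _
    rw [Complex.div_re]
    have h1 : ((t:ℂ)).im = 0 := by simp
    have h2 : ((t:ℂ)).re = t := by simp
    have h3 : (1 + e * (t:ℂ)).im = e.im * t := by simp
    have h4 : (1 + e * (t:ℂ)).re = 1 + e.re * t := by simp
    rw [h1, h2, h3, h4]
    ring
  rw [hre, integral_add (intgT ν he) ((intgU ν he).const_mul e.re), integral_const_mul]
  simp

lemma abs_pos' (he : 0 < e.im) (t : ℝ) : 0 < Complex.abs (1 + e * (t:ℂ)) := by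
  rw [AbsoluteValue.pos_iff]; exact one_add_ne he t

lemma intgAbsC (μ : Measure ℝ) [IsFiniteMeasure μ] (he : 0 < e.im) :
    Integrable (fun t : ℝ => |t| / Complex.abs (1 + e * (t:ℂ))) μ := by
  refine ⟨(Continuous.div (by continuity) (Complex.continuous_abs.comp (by continuity))
    (fun t => (abs_pos' he t).ne')).aestronglyMeasurable, ?_⟩
  refine HasFiniteIntegral.of_bounded (C := (e.im)⁻¹) (Eventually.of_forall fun t => ?_)
  have h := abs_ge_im he.le t
  have habs := abs_pos' he t
  rw [Real.norm_eq_abs, abs_of_nonneg (by positivity), div_le_iff₀ habs,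
    inv_mul_eq_div, le_div_iff₀ he]
  linarith

/-- key pointwise AM-GM : X ≤ λ/2 + X²/(2λ) -/
lemma amgm {X lam : ℝ} (hX : 0 ≤ X) (hl : 0 < lam) : X ≤ lam/2 + X^2/(2*lam) := by
  rw [div_add_div _ _ (by norm_num) (by positivity), le_div_iff₀ (by positivity)]
  nlinarith [sq_nonneg (X - lam)]

lemma sq_eq (he : 0 < e.im) (t : ℝ) :
    (|t| / Complex.abs (1 + e * (t:ℂ)))^2 = t^2 / Complex.normSq (1 + e * (t:ℂ)) := by
  rw [div_pow, sq_abs, Complex.sq_abs]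

lemma cs_bound (ν : Measure ℝ) [IsProbabilityMeasure ν] (he : 0 < e.im)
    (hu : 0 < ∫ t, t^2 / Complex.normSq (1 + e * (t:ℂ)) ∂ν) :
    ∫ t, |t| / Complex.abs (1 + e * (t:ℂ)) ∂ν
      ≤ Real.sqrt (∫ t, t^2 / Complex.normSq (1 + e * (t:ℂ)) ∂ν) := by
  set u := ∫ t, t^2 / Complex.normSq (1 + e * (t:ℂ)) ∂ν with hu_def
  have hsu : 0 < Real.sqrt u := Real.sqrt_pos.2 hu
  have hmono : ∫ t, |t| / Complex.abs (1 + e * (t:ℂ)) ∂ν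
      ≤ ∫ t, (Real.sqrt u / 2 + (t^2 / Complex.normSq (1 + e * (t:ℂ))) / (2 * Real.sqrt u)) ∂ν := by
    refine integral_mono (intgAbsC ν he) ?_ (fun t => ?_)
    · exact (integrable_const _).add ((intgU ν he).div_const _)
    · have h := amgm (X := |t| / Complex.abs (1 + e * (t:ℂ)))
        (by positivity) hsu
      rwa [sq_eq he t] at h
  refine hmono.trans ?_
  rw [integral_add (integrable_const _) ((intgU ν he).div_const _), integral_const]
  simp only [probReal_univ, one_smul]
  rw [integral_div, ← hu_def]
  rw [div_add_div _ _ (by norm_num) (by positivity), div_le_iff₀ (by positivity)]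
  nlinarith [Real.sq_sqrt hu.le, Real.sqrt_nonneg u]

lemma ae_nonneg {μ : Measure ℝ} (h0 : μ (Iio 0) = 0) : ∀ᵐ t ∂μ, 0 ≤ t := by
  rw [ae_iff]
  convert h0 using 2
  ext t
  simp [not_le]

lemma cs_trunc (ν : Measure ℝ) [IsProbabilityMeasure ν] (h0 : ν (Iio 0) = 0)
    (he : 0 < e.im) {A : ℝ} (hA0 : 0 ≤ A) (hA : Complex.abs e * A ≤ 1/2)
    (hu : 0 < ∫ t, t^2 / Complex.normSq (1 + e * (t:ℂ)) ∂ν) :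
    ∫ t, |t| / Complex.abs (1 + e * (t:ℂ)) ∂ν
      ≤ 2*A + Real.sqrt ((∫ t, t^2 / Complex.normSq (1 + e * (t:ℂ)) ∂ν)
          * (ν (Ioi A)).toReal) := by
  set u := ∫ t, t^2 / Complex.normSq (1 + e * (t:ℂ)) ∂ν with hu_def
  set m := (ν (Ioi A)).toReal with hm_def
  have hbody : ∀ t : ℝ, 0 ≤ t → t ≤ A → |t| / Complex.abs (1 + e * (t:ℂ)) ≤ 2*A := by
    intro t ht htA
    have h1 : (1:ℝ)/2 ≤ Complex.abs (1 + e * (t:ℂ)) := by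
      have := abs_lower e t
      have h2 : Complex.abs e * |t| ≤ 1/2 := by
        rw [abs_of_nonneg ht]
        calc Complex.abs e * t ≤ Complex.abs e * A := by
              have := Complex.abs.nonneg e
              gcongr
        _ ≤ 1/2 := hA
      linarith
    rw [div_le_iff₀ (by linarith)]
    rw [abs_of_nonneg ht]
    nlinarith
  rcases eq_or_lt_of_le (ENNReal.toReal_nonneg : (0:ℝ) ≤ m) with hm0 | hmpos
  · -- tail has zero mass
    have hae : ∀ᵐ (t:ℝ) ∂ν, |t| / Complex.abs (1 + e * (t:ℂ)) ≤ 2*A := by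
      have h1 : ν (Ioi A) = 0 := by
        have := ENNReal.toReal_eq_zero_iff (ν (Ioi A))
        rcases this.1 hm0.symm with h | h
        · exact h
        · exact absurd h (by simp [measure_ne_top])
      have h2 : ∀ᵐ (t:ℝ) ∂ν, t ∉ Ioi A := by
        rw [ae_iff]; convert h1 using 2; ext a; simp
      filter_upwards [ae_nonneg h0, h2] with t ht htA
      exact hbody t ht (by simpa using htA)
    calc ∫ t, |t| / Complex.abs (1 + e * (t:ℂ)) ∂ν ≤ ∫ _t, 2*A ∂ν := by
          exact integral_mono_ae (intgAbsC ν he) (integrable_const _) hae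
    _ = 2*A := by simp
    _ ≤ 2*A + Real.sqrt (u * m) := by linarith [Real.sqrt_nonneg (u*m)]
  · -- tail positive
    set lam := Real.sqrt u / Real.sqrt m with hlam_def
    have hsu : 0 < Real.sqrt u := Real.sqrt_pos.2 hu
    have hsm : 0 < Real.sqrt m := Real.sqrt_pos.2 hmpos
    have hlam : 0 < lam := by positivity
    have hae : ∀ᵐ (t:ℝ) ∂ν, |t| / Complex.abs (1 + e * (t:ℂ))
        ≤ 2*A + ((Ioi A).indicator (fun _ => lam/2) t
            + t^2 / Complex.normSq (1 + e * (t:ℂ)) / (2*lam)) := by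
      filter_upwards [ae_nonneg h0] with t ht
      rcases le_or_gt t A with htA | htA
      · have := hbody t ht htA
        have hind : 0 ≤ (Ioi A).indicator (fun _ => lam/2) t := by
          apply Set.indicator_nonneg; intro x _; positivity
        have habs := abs_pos' he t
        have : 0 ≤ t^2 / Complex.normSq (1 + e * (t:ℂ)) / (2*lam) := by
          have h2 : 0 < Complex.normSq (1 + e * (t:ℂ)) := Complex.normSq_pos.2 (one_add_ne he t)
          positivity
        linarith
      · have h := amgm (X := |t| / Complex.abs (1 + e * (t:ℂ))) (by positivity) hlam
        rw [sq_eq he t] at h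
        rw [Set.indicator_of_mem (by exact htA : t ∈ Ioi A)]
        linarith
    have hint : ∫ t, (2*A + ((Ioi A).indicator (fun _ => lam/2) t
        + t^2 / Complex.normSq (1 + e * (t:ℂ)) / (2*lam))) ∂ν
        = 2*A + (lam/2 * m + u / (2*lam)) := by
      rw [integral_add (integrable_const _), integral_const]
      · simp only [probReal_univ, one_smul]
        rw [integral_add, integral_indicator_const _ measurableSet_Ioi, integral_div]
        · simp [hm_def, ← hu_def, Measure.real]; ring
        · exact (integrable_const _).indicator measurableSet_Ioi
        · exact (intgU ν he).div_const _
      · exact ((integrable_const _).indicator measurableSet_Ioi).add ((intgU ν he).div_const _)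
    have hval : lam/2 * m + u / (2*lam) = Real.sqrt (u * m) := by
      rw [Real.sqrt_mul hu.le, hlam_def]
      have h1 : Real.sqrt u * Real.sqrt u = u := Real.mul_self_sqrt hu.le
      have h2 : Real.sqrt m * Real.sqrt m = m := Real.mul_self_sqrt hmpos.le
      field_simp
      nlinarith
    calc ∫ t, |t| / Complex.abs (1 + e * (t:ℂ)) ∂ν
        ≤ ∫ t, (2*A + ((Ioi A).indicator (fun _ => lam/2) t
            + t^2 / Complex.normSq (1 + e * (t:ℂ)) / (2*lam))) ∂ν := by
          refine integral_mono_ae (intgAbsC ν he) ?_ hae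
          exact (integrable_const _).add
            (((integrable_const _).indicator measurableSet_Ioi).add ((intgU ν he).div_const _))
    _ = 2*A + (lam/2 * m + u / (2*lam)) := hint
    _ = 2*A + Real.sqrt (u * m) := by rw [hval]

lemma annulus_lb (μ : Measure ℝ) [IsProbabilityMeasure μ] (hd : 0 < d.im)
    {τ : ℝ} (hτ : 0 < τ) (hτ1 : τ ≤ 1) :
    (μ (Icc τ τ⁻¹)).toReal * (τ^2 / (1 + Complex.abs d * τ⁻¹)^2)
      ≤ ∫ t, t^2 / Complex.normSq (1 + d * (t:ℂ)) ∂μ := by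
  have hnn : ∀ t : ℝ, 0 ≤ t^2 / Complex.normSq (1 + d * (t:ℂ)) := by
    intro t
    have := Complex.normSq_pos.2 (one_add_ne hd t)
    positivity
  have h1 : ∫ t in Icc τ τ⁻¹, t^2 / Complex.normSq (1 + d * (t:ℂ)) ∂μ
      ≤ ∫ t, t^2 / Complex.normSq (1 + d * (t:ℂ)) ∂μ := by
    refine setIntegral_le_integral (intgU μ hd) (Eventually.of_forall fun t => hnn t)
  refine le_trans ?_ h1
  have h2 : ∀ t ∈ Icc τ τ⁻¹, τ^2 / (1 + Complex.abs d * τ⁻¹)^2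
      ≤ t^2 / Complex.normSq (1 + d * (t:ℂ)) := by
    intro t ht
    obtain ⟨ht1, ht2⟩ := ht
    have ht0 : 0 < t := lt_of_lt_of_le hτ ht1
    have hden : Complex.normSq (1 + d * (t:ℂ)) ≤ (1 + Complex.abs d * τ⁻¹)^2 := by
      rw [← Complex.sq_abs]
      have hub : Complex.abs (1 + d * (t:ℂ)) ≤ 1 + Complex.abs d * τ⁻¹ := by
        refine (abs_upper d ht0.le).trans ?_
        have := Complex.abs.nonneg d
        gcongr
      have := Complex.abs.nonneg (1 + d * (t:ℂ))
      nlinarith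
    have hdpos : 0 < Complex.normSq (1 + d * (t:ℂ)) := Complex.normSq_pos.2 (one_add_ne hd t)
    have hnum : τ^2 ≤ t^2 := by nlinarith
    exact div_le_div₀ (by positivity) hnum hdpos hden
  calc (μ (Icc τ τ⁻¹)).toReal * (τ^2 / (1 + Complex.abs d * τ⁻¹)^2)
      = ∫ _t in Icc τ τ⁻¹, τ^2 / (1 + Complex.abs d * τ⁻¹)^2 ∂μ := by
        rw [setIntegral_const]; simp [Measure.real]
  _ ≤ ∫ t in Icc τ τ⁻¹, t^2 / Complex.normSq (1 + d * (t:ℂ)) ∂μ := by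
        refine setIntegral_mono_on (integrableOn_const (measure_lt_top μ _).ne)
          ((intgU μ hd).integrableOn) measurableSet_Icc h2

lemma pos_mass (μ : Measure ℝ) [IsProbabilityMeasure μ] (h0 : μ (Iio 0) = 0)
    (hμ : μ ≠ Measure.dirac 0) : 0 < μ (Ioi 0) := by
  by_contra h
  push_neg at h
  have hIoi : μ (Ioi 0) = 0 := le_antisymm (by simpa using h) zero_le
  apply hμ
  have hcompl : μ ({(0:ℝ)}ᶜ) = 0 := by
    rw [← Set.Iio_union_Ioi]
    exact le_antisymm (le_trans (measure_union_le _ _) (by simp [h0, hIoi])) zero_le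
  have hzero : μ {(0:ℝ)} = 1 := by
    have := measure_add_measure_compl (μ := μ) (s := {(0:ℝ)}) (measurableSet_singleton 0)
    rw [hcompl, add_zero] at this
    simpa using this
  ext s hs
  rw [Measure.dirac_apply' _ hs]
  by_cases h0s : (0:ℝ) ∈ s
  · have hle : μ s ≤ 1 := prob_le_one
    have hge : μ {(0:ℝ)} ≤ μ s := measure_mono (singleton_subset_iff.2 h0s)
    rw [hzero] at hge
    simp [h0s, le_antisymm hle hge]
  · have : s ⊆ {(0:ℝ)}ᶜ := fun x hx => by
      simp only [mem_compl_iff, mem_singleton_iff]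
      intro hx0; rw [hx0] at hx; exact h0s hx
    have := measure_mono_null this hcompl
    simp [h0s, this]

lemma exists_annulus (μ : Measure ℝ) [IsProbabilityMeasure μ] (h0 : μ (Iio 0) = 0)
    (hμ : μ ≠ Measure.dirac 0) :
    ∃ τ : ℝ, 0 < τ ∧ τ ≤ 1 ∧ 0 < (μ (Icc τ τ⁻¹)).toReal := by
  have hpos := pos_mass μ h0 hμ
  have hcover : (Ioi (0:ℝ)) ⊆ ⋃ n : ℕ, Icc ((n+1:ℝ))⁻¹ (n+1) := by
    intro x hx
    simp only [mem_Ioi] at hx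
    obtain ⟨n, hn⟩ := exists_nat_gt (max x⁻¹ x)
    refine mem_iUnion.2 ⟨n, ?_⟩
    constructor
    · have h1 : x⁻¹ ≤ (n:ℝ) + 1 := le_trans (le_trans (le_max_left _ _) hn.le) (by linarith)
      have h2 : (0:ℝ) < (n:ℝ)+1 := by positivity
      exact inv_le_of_inv_le₀ hx h1
    · exact le_trans (le_trans (le_max_right _ _) hn.le) (by linarith)
  by_contra hcon
  push_neg at hcon
  have hall : ∀ n : ℕ, μ (Icc ((n+1:ℝ))⁻¹ (n+1)) = 0 := by
    intro n
    have := hcon ((n+1:ℝ))⁻¹ (by positivity) (by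
      rw [inv_le_one_iff₀]; right; push_cast; linarith)
    rw [inv_inv] at this
    have h2 := this
    rcases (ENNReal.toReal_eq_zero_iff _).1 (le_antisymm (by simpa using h2) ENNReal.toReal_nonneg) with h|h
    · exact h
    · exact absurd h (measure_ne_top μ _)
  have : μ (⋃ n : ℕ, Icc ((n+1:ℝ))⁻¹ (n+1)) = 0 := measure_iUnion_null hall
  exact absurd (measure_mono_null hcover this) (ne_of_gt hpos)

lemma exists_tail (μ : Measure ℝ) [IsProbabilityMeasure μ] {η : ℝ} (hη : 0 < η) :
    ∃ A : ℝ, 1 ≤ A ∧ (μ (Ioi A)).toReal ≤ η := by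
  have hanti : Antitone (fun n : ℕ => Ioi (n:ℝ)) := by
    intro a b hab
    exact Ioi_subset_Ioi (by exact_mod_cast hab)
  have hempty : (⋂ n : ℕ, Ioi ((n:ℝ))) = ∅ := by
    ext x
    simp only [mem_iInter, mem_Ioi, mem_empty_iff_false, iff_false, not_forall, not_lt]
    obtain ⟨n, hn⟩ := exists_nat_gt x
    exact ⟨n, hn.le⟩
  have htend : Tendsto (fun n : ℕ => μ (Ioi (n:ℝ))) atTop (nhds (μ (⋂ n : ℕ, Ioi (n:ℝ)))) := by
    refine tendsto_measure_iInter_atTop (fun n => measurableSet_Ioi.nullMeasurableSet) hanti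
      ⟨0, measure_ne_top μ _⟩
  rw [hempty] at htend
  simp only [measure_empty] at htend
  have hev : ∀ᶠ n : ℕ in atTop, μ (Ioi (n:ℝ)) < ENNReal.ofReal η := by
    exact htend.eventually_lt_const (by simpa using hη)
  obtain ⟨n, hn⟩ := hev.exists
  refine ⟨max (n:ℝ) 1, le_max_right _ _, ?_⟩
  have hsub : Ioi (max (n:ℝ) 1) ⊆ Ioi (n:ℝ) := Ioi_subset_Ioi (le_max_left _ _)
  have := measure_mono (μ := μ) hsub
  have hle : μ (Ioi (max (n:ℝ) 1)) ≤ ENNReal.ofReal η := le_trans this hn.le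
  calc (μ (Ioi (max (n:ℝ) 1))).toReal ≤ (ENNReal.ofReal η).toReal :=
        ENNReal.toReal_mono (by simp) hle
  _ = η := ENNReal.toReal_ofReal hη.le

/-- norm of `z*e` is bounded by `c₂` times the integral of norms. -/
lemma abs_ze_le {z d e : ℂ} (νt : Measure ℝ) [IsProbabilityMeasure νt]
    (hz : 0 < z.im) (hd : 0 < d.im) (c₂ : ℝ) (hc₂ : 0 < c₂)
    (heq : e = (c₂:ℂ) * ∫ t, (t:ℂ) / (-z * (1 + d * (t:ℂ))) ∂νt) :
    Complex.abs (z * e) ≤ c₂ * ∫ t, |t| / Complex.abs (1 + d * (t:ℂ)) ∂νt := by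
  rw [zd_eq νt hz c₂ heq]
  rw [map_mul]
  have h1 : Complex.abs (-(c₂:ℂ)) = c₂ := by
    rw [map_neg_eq_map, Complex.abs_ofReal, abs_of_pos hc₂]
  rw [h1]
  gcongr
  calc Complex.abs (∫ t, (t:ℂ) / (1 + d * (t:ℂ)) ∂νt)
      = ‖∫ t, (t:ℂ) / (1 + d * (t:ℂ)) ∂νt‖ := (Complex.norm_eq_abs _).symm
  _ ≤ ∫ t, ‖(t:ℂ) / (1 + d * (t:ℂ))‖ ∂νt := norm_integral_le_integral_norm _
  _ = ∫ t, |t| / Complex.abs (1 + d * (t:ℂ)) ∂νt := by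
      refine integral_congr_ae (Eventually.of_forall fun t => ?_)
      show ‖(t:ℂ) / (1 + d * (t:ℂ))‖ = |t| / Complex.abs (1 + d * (t:ℂ))
      rw [norm_div, Complex.norm_real, Real.norm_eq_abs, Complex.norm_eq_abs]

set_option maxHeartbeats 2000000 in
lemma core (ν νt : Measure ℝ) [IsProbabilityMeasure ν] [IsProbabilityMeasure νt]
    (hν0 : ν (Iio 0) = 0) (hνt0 : νt (Iio 0) = 0) (hνtd : νt ≠ Measure.dirac 0)
    (c₁ c₂ : ℝ) (hc₁ : 0 < c₁) (hc₂ : 0 < c₂) (ε B : ℝ) (hε : 0 < ε) (hB : 0 < B) :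
    ∃ M : ℝ, 0 ≤ M ∧ ∀ z d e : ℂ, 0 < z.im → ε ≤ |z.re| → Complex.abs z ≤ B →
      0 < d.im → 0 < e.im →
      d = (c₁:ℂ) * ∫ t, (t:ℂ) / (-z * (1 + e * (t:ℂ))) ∂ν →
      e = (c₂:ℂ) * ∫ t, (t:ℂ) / (-z * (1 + d * (t:ℂ))) ∂νt →
      (∫ t, t^2 / Complex.normSq (1 + e * (t:ℂ)) ∂ν) ≤ M := by
  obtain ⟨τ, hτ0, hτ1, hp⟩ := exists_annulus νt hνt0 hνtd
  set p := (νt (Icc τ τ⁻¹)).toReal with hp_def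
  set K := B^2 / (c₁ * c₂) with hK_def
  have hK : 0 < K := by positivity
  set κ := ε * τ^2 * Real.sqrt (p / K) with hκ_def
  have hκ : 0 < κ := by
    have : 0 < Real.sqrt (p / K) := Real.sqrt_pos.2 (by positivity)
    positivity
  have hη : (0:ℝ) < (κ / (2*c₁))^2 := by positivity
  obtain ⟨A, hA1, hAη⟩ := exists_tail ν hη
  have hA0 : (0:ℝ) < A := lt_of_lt_of_le one_pos hA1
  set U₀ := 4 * c₂^2 * A^2 * K / ε^2 with hU_def
  have hU₀ : 0 < U₀ := by positivity
  clear_value p K κ U₀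
  refine ⟨max (U₀ + 1) ((2*(2*c₁*A + ε*τ)/κ)^2), le_trans (by positivity) (le_max_left _ _),
    fun z d e hz hre hzB hd he heq1 heq2 => ?_⟩
  set u := ∫ t, t^2 / Complex.normSq (1 + e * (t:ℂ)) ∂ν with hu_def
  set v := ∫ t, t^2 / Complex.normSq (1 + d * (t:ℂ)) ∂νt with hv_def
  set st := ∫ t, t / Complex.normSq (1 + d * (t:ℂ)) ∂νt with hs_def
  have hu0 : 0 ≤ u := integral_nonneg fun t => by
    have := normSq_pos' he t; positivity
  have hvlb : p * (τ^2 / (1 + Complex.abs d * τ⁻¹)^2) ≤ v := by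
    rw [hp_def, hv_def]; exact annulus_lb νt hd hτ0 hτ1
  have hdenpos : 0 < 1 + Complex.abs d * τ⁻¹ :=
    add_pos_of_pos_of_nonneg one_pos
      (mul_nonneg (Complex.abs.nonneg d) (inv_nonneg.2 hτ0.le))
  have hvpos : 0 < v :=
    lt_of_lt_of_le (mul_pos hp (div_pos (pow_pos hτ0 2) (pow_pos hdenpos 2))) hvlb
  have hst0 : 0 ≤ st := integral_nonneg_of_ae (by
    filter_upwards [ae_nonneg hνt0] with t ht
    have := normSq_pos' hd t
    positivity)
  -- key product bound
  have him_zd : (z*d).im = c₁ * e.im * u := im_zd ν hz he c₁ heq1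
  have him_ze : (z*e).im = c₂ * d.im * v := im_zd νt hz hd c₂ heq2
  have hre_ze : (z*e).re = -(c₂) * (st + d.re * v) := by
    have h := re_zd νt hz hd c₂ heq2
    rw [h]
  have halg : Complex.normSq z * e.im = z.re * (z*e).im - z.im * (z*e).re := by
    rw [Complex.mul_im, Complex.mul_re, Complex.normSq_apply]; ring
  have hzd_im2 : (z*d).im = z.re * d.im + z.im * d.re := Complex.mul_im z d
  have hstar : e.im * (Complex.normSq z - c₁ * c₂ * u * v) = c₂ * z.im * st := by
    rw [him_zd] at hzd_im2
    rw [him_ze, hre_ze] at halg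
    linear_combination halg - c₂ * v * hzd_im2
  have hnsq : Complex.normSq z ≤ B^2 := by
    rw [← Complex.sq_abs]
    exact pow_le_pow_left₀ (Complex.abs.nonneg z) hzB 2
  have hKey : c₁ * c₂ * u * v ≤ B^2 := by
    clear_value u v st
    have h1 : 0 ≤ e.im * (Complex.normSq z - c₁ * c₂ * u * v) := by
      rw [hstar]
      exact mul_nonneg (mul_nonneg hc₂.le hz.le) hst0
    have h2 : 0 ≤ Complex.normSq z - c₁ * c₂ * u * v := by
      by_contra hcon
      push_neg at hcon
      have h3 : e.im * (Complex.normSq z - c₁ * c₂ * u * v) < 0 :=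
        mul_neg_of_pos_of_neg he hcon
      linarith
    linarith
  -- case split
  clear_value u v st
  rcases le_or_gt u (U₀ + 1) with hcase | hcase
  · exact hcase.trans (le_max_left _ _)
  have hupos : 0 < u := lt_trans (by positivity) hcase
  have hvub : v ≤ K / u := by
    rw [hK_def, le_div_iff₀ hupos, le_div_iff₀ (show (0:ℝ) < c₁ * c₂ by positivity)]
    linarith [hKey]
  have hzabs : ε ≤ Complex.abs z := le_trans hre (le_trans (Complex.abs_re_le_abs z) le_rfl)
  -- |e| small
  have habs_ze : Complex.abs (z*e) ≤ c₂ * Real.sqrt v := by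
    have hcs := cs_bound νt hd (by rw [← hv_def]; exact hvpos)
    rw [← hv_def] at hcs
    exact le_trans (abs_ze_le νt hz hd c₂ hc₂ heq2)
      (mul_le_mul_of_nonneg_left hcs hc₂.le)
  have habs_e : Complex.abs e ≤ c₂ * Real.sqrt v / ε := by
    rw [le_div_iff₀ hε]
    calc Complex.abs e * ε ≤ Complex.abs e * Complex.abs z := by
          have := Complex.abs.nonneg e
          gcongr
    _ = Complex.abs (z * e) := by rw [← map_mul, mul_comm]
    _ ≤ c₂ * Real.sqrt v := habs_ze
  have hsmall : Complex.abs e * A ≤ 1/2 := by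
    have h1 : v ≤ ε^2 / (4 * c₂^2 * A^2) := by
      refine hvub.trans ?_
      rw [div_le_div_iff₀ hupos (by positivity)]
      calc K * (4 * c₂^2 * A^2) = ε^2 * U₀ := by rw [hU_def]; field_simp
      _ ≤ ε^2 * u := mul_le_mul_of_nonneg_left (by linarith) (sq_nonneg ε)
    have h2 : Real.sqrt v ≤ ε / (2 * c₂ * A) := by
      have h3 : Real.sqrt v ≤ Real.sqrt (ε^2 / (4 * c₂^2 * A^2)) := Real.sqrt_le_sqrt h1
      have h4 : ε^2 / (4 * c₂^2 * A^2) = (ε / (2 * c₂ * A))^2 := by field_simp; ring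
      rw [h4, Real.sqrt_sq (by positivity)] at h3
      exact h3
    calc Complex.abs e * A ≤ (c₂ * Real.sqrt v / ε) * A := by
          have := Complex.abs.nonneg e
          gcongr
    _ ≤ (c₂ * (ε / (2 * c₂ * A)) / ε) * A := by
          have h5 : 0 ≤ Real.sqrt v := Real.sqrt_nonneg v
          gcongr
    _ = 1/2 := by field_simp
  -- upper bound for |z*d|
  have habs_zd_ub : Complex.abs (z*d) ≤ 2*c₁*A + (κ/2) * Real.sqrt u := by
    have h1 : Complex.abs (z*d) ≤ c₁ * ∫ t, |t| / Complex.abs (1 + e * (t:ℂ)) ∂ν :=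
      abs_ze_le ν hz he c₁ hc₁ heq1
    have h2 := cs_trunc ν hν0 he hA0.le hsmall (by rw [← hu_def]; exact hupos)
    rw [← hu_def] at h2
    have h3 : Real.sqrt (u * (ν (Ioi A)).toReal) ≤ Real.sqrt u * (κ/(2*c₁)) := by
      calc Real.sqrt (u * (ν (Ioi A)).toReal) ≤ Real.sqrt (u * (κ/(2*c₁))^2) := by
            refine Real.sqrt_le_sqrt (mul_le_mul_of_nonneg_left hAη hu0)
      _ = Real.sqrt u * (κ/(2*c₁)) := by
            rw [Real.sqrt_mul hu0, Real.sqrt_sq (by positivity)]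
    calc Complex.abs (z*d) ≤ c₁ * (2*A + Real.sqrt (u * (ν (Ioi A)).toReal)) := by
          refine h1.trans ?_
          gcongr
    _ ≤ c₁ * (2*A + Real.sqrt u * (κ/(2*c₁))) := by gcongr
    _ = 2*c₁*A + (κ/2) * Real.sqrt u := by field_simp
  -- lower bound for |z*d|
  have habs_zd_lb : κ * Real.sqrt u - ε * τ ≤ Complex.abs (z*d) := by
    set D := Complex.abs d with hD_def
    have hdd : 0 ≤ D := Complex.abs.nonneg d
    set Q := 1 + D * τ⁻¹ with hQ_def
    have hQ : 0 < Q := by positivity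
    have h1 : p * (τ^2 / Q^2) ≤ K / u := hvlb.trans hvub
    have h3 : p * τ^2 * u ≤ K * Q^2 := by
      rw [mul_div_assoc'] at h1
      rw [div_le_div_iff₀ (pow_pos hQ 2) hupos] at h1
      linarith [h1]
    have hX : (0:ℝ) ≤ τ * Real.sqrt (p/K) * Real.sqrt u := by positivity
    have h4 : τ * Real.sqrt (p/K) * Real.sqrt u ≤ Q := by
      have h5 : (τ * Real.sqrt (p/K) * Real.sqrt u)^2 ≤ Q^2 := by
        have h6 : (Real.sqrt (p/K))^2 = p/K := Real.sq_sqrt (by positivity)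
        have h7 : (Real.sqrt u)^2 = u := Real.sq_sqrt hu0
        calc (τ * Real.sqrt (p/K) * Real.sqrt u)^2
            = τ^2 * (p/K) * u := by rw [mul_pow, mul_pow, h6, h7]
        _ = p * τ^2 * u / K := by ring
        _ ≤ Q^2 := by
            rw [div_le_iff₀ hK]
            linarith [h3]
      calc τ * Real.sqrt (p/K) * Real.sqrt u
          = Real.sqrt ((τ * Real.sqrt (p/K) * Real.sqrt u)^2) := (Real.sqrt_sq hX).symm
      _ ≤ Real.sqrt (Q^2) := Real.sqrt_le_sqrt h5
      _ = Q := Real.sqrt_sq hQ.le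
    have h8 : τ^2 * Real.sqrt (p/K) * Real.sqrt u ≤ D + τ := by
      have h9 : τ * (τ * Real.sqrt (p/K) * Real.sqrt u) ≤ τ * Q :=
        mul_le_mul_of_nonneg_left h4 hτ0.le
      have h10 : τ * Q = τ + D := by
        rw [hQ_def]; field_simp
      calc τ^2 * Real.sqrt (p/K) * Real.sqrt u
          = τ * (τ * Real.sqrt (p/K) * Real.sqrt u) := by ring
      _ ≤ τ * Q := h9
      _ = τ + D := h10
      _ = D + τ := by ring
    have h11 : ε * D ≤ Complex.abs (z*d) := by
      rw [map_mul]
      exact mul_le_mul_of_nonneg_right hzabs hdd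
    have hκD : κ * Real.sqrt u ≤ ε * D + ε * τ := by
      rw [hκ_def]
      have h12 := mul_le_mul_of_nonneg_left h8 hε.le
      linarith [h12]
    linarith
  -- combine
  have hfinal : Real.sqrt u ≤ 2*(2*c₁*A + ε*τ)/κ := by
    have h1 : κ * Real.sqrt u - ε * τ ≤ 2*c₁*A + (κ/2) * Real.sqrt u :=
      le_trans habs_zd_lb habs_zd_ub
    rw [le_div_iff₀ hκ]
    linarith [h1]
  have : u ≤ (2*(2*c₁*A + ε*τ)/κ)^2 := by
    calc u = (Real.sqrt u)^2 := (Real.sq_sqrt hu0).symm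
    _ ≤ (2*(2*c₁*A + ε*τ)/κ)^2 :=
        pow_le_pow_left₀ (Real.sqrt_nonneg u) hfinal 2
  exact this.trans (le_max_right _ _)

lemma ell_one_pointwise (he : 0 < e.im) {t : ℝ} (ht : 0 ≤ t) :
    t / Complex.normSq (1 + e * (t:ℂ))
      ≤ t^2 / Complex.normSq (1 + e * (t:ℂ)) / 2
        + (2 + 2*(Complex.abs e)^2 * (t^2 / Complex.normSq (1 + e * (t:ℂ)))) := by
  set N := Complex.normSq (1 + e * (t:ℂ)) with hN_def
  have hN : 0 < N := normSq_pos' he t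
  have habs2 : (Complex.abs (1 + e * (t:ℂ)))^2 = N := Complex.sq_abs _
  have step1 : t / N ≤ t^2 / N / 2 + 1 / (2*N) := by
    rw [div_div, div_add_div _ _ (by positivity) (by positivity), div_le_div_iff₀ hN (by positivity)]
    nlinarith [mul_nonneg (mul_pos hN hN).le (sq_nonneg (t-1))]
  have step2 : 1 / (2*N) ≤ 2 + 2*(Complex.abs e)^2 * (t^2 / N) := by
    have hE : 0 ≤ Complex.abs e := Complex.abs.nonneg e
    rcases le_or_gt (Complex.abs e * t) (1/2) with hsm | hlg
    · have h1 : (1:ℝ)/2 ≤ Complex.abs (1 + e * (t:ℂ)) := by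
        have := abs_lower e t
        rw [abs_of_nonneg ht] at this
        linarith
      have h2 : (1:ℝ)/4 ≤ N := by
        rw [← habs2]
        nlinarith
      have h3 : 1 / (2*N) ≤ 2 := by
        rw [div_le_iff₀ (by positivity)]
        linarith
      have h4 : 0 ≤ 2*(Complex.abs e)^2 * (t^2 / N) := by positivity
      linarith
    · have h1 : 1 ≤ 4*(Complex.abs e)^2*t^2 := by nlinarith
      have h2 : 1 / (2*N) ≤ 4*(Complex.abs e)^2*t^2 / (2*N) := by
        apply div_le_div_of_nonneg_right h1 (by positivity) |>.trans_eq ?_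
        ring
      have h3 : (4*(Complex.abs e)^2*t^2) / (2*N) = 2*(Complex.abs e)^2 * (t^2/N) := by
        field_simp; ring
      have h4 : (0:ℝ) ≤ 2 := by norm_num
      rw [h3] at h2
      linarith
  linarith

lemma s_le (ν : Measure ℝ) [IsProbabilityMeasure ν] (h0 : ν (Iio 0) = 0) (he : 0 < e.im) :
    ∫ t, t / Complex.normSq (1 + e * (t:ℂ)) ∂ν
      ≤ (∫ t, t^2 / Complex.normSq (1 + e * (t:ℂ)) ∂ν)/2 + 2
        + 2*(Complex.abs e)^2 * ∫ t, t^2 / Complex.normSq (1 + e * (t:ℂ)) ∂ν := by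
  have hint : Integrable (fun t : ℝ => t^2 / Complex.normSq (1 + e * (t:ℂ)) / 2
      + (2 + 2*(Complex.abs e)^2 * (t^2 / Complex.normSq (1 + e * (t:ℂ))))) ν :=
    ((intgU ν he).div_const 2).add ((integrable_const _).add ((intgU ν he).const_mul _))
  have h1 : ∫ t, t / Complex.normSq (1 + e * (t:ℂ)) ∂ν
      ≤ ∫ t, (t^2 / Complex.normSq (1 + e * (t:ℂ)) / 2
        + (2 + 2*(Complex.abs e)^2 * (t^2 / Complex.normSq (1 + e * (t:ℂ))))) ∂ν := by
    refine integral_mono_ae (intgT ν he) hint ?_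
    filter_upwards [ae_nonneg h0] with t ht
    exact ell_one_pointwise he ht
  refine h1.trans_eq ?_
  have e1 : ∫ t, (t^2 / Complex.normSq (1 + e * (t:ℂ)) / 2
      + (2 + 2*(Complex.abs e)^2 * (t^2 / Complex.normSq (1 + e * (t:ℂ))))) ∂ν
      = (∫ t, t^2 / Complex.normSq (1 + e * (t:ℂ)) / 2 ∂ν)
        + ∫ t, (2 + 2*(Complex.abs e)^2 * (t^2 / Complex.normSq (1 + e * (t:ℂ)))) ∂ν :=
    integral_add ((intgU ν he).div_const 2) ((integrable_const _).add ((intgU ν he).const_mul _))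
  have e2 : ∫ t, ((2:ℝ) + 2*(Complex.abs e)^2 * (t^2 / Complex.normSq (1 + e * (t:ℂ)))) ∂ν
      = (∫ _t, (2:ℝ) ∂ν)
        + ∫ t, 2*(Complex.abs e)^2 * (t^2 / Complex.normSq (1 + e * (t:ℂ))) ∂ν :=
    integral_add (integrable_const _) ((intgU ν he).const_mul _)
  rw [e1, e2, integral_const, integral_div, integral_const_mul]
  simp only [probReal_univ, one_smul]
  ring


end Aux

set_option maxHeartbeats 2000000 in
theorem stmt7 (ν νt : Measure ℝ) [IsProbabilityMeasure ν] [IsProbabilityMeasure νt]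
    (hνpos : ν (Set.Iio (0 : ℝ)) = 0) (hνtpos : νt (Set.Iio (0 : ℝ)) = 0)
    (hν0 : ν ≠ Measure.dirac 0) (hνt0 : νt ≠ Measure.dirac 0)
    (c : ℝ) (hc : 0 < c)
    (δ δt : ℂ → ℂ) (hsol : ∀ z ∈ UpperHalf, IsPair ν νt c z (δ z) (δt z)) :
    ∀ ℓ : ℕ, ℓ = 1 ∨ ℓ = 2 →
      ∀ R : Set ℂ, R ⊆ UpperHalf → Bornology.IsBounded R →
        (∃ ε > (0 : ℝ), ∀ z ∈ R, ε ≤ |z.re|) →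
        (∃ M : ℝ, ∀ z ∈ R,
          (∫ t, t ^ ℓ / ‖1 + δt z * (t : ℂ)‖ ^ 2 ∂ν) ≤ M) ∧
        (∃ M : ℝ, ∀ z ∈ R,
          (∫ t, t ^ ℓ / ‖1 + δ z * (t : ℂ)‖ ^ 2 ∂νt) ≤ M) := by
  intro ℓ hℓ R hRU hRB hRε
  obtain ⟨ε, hε, hεR⟩ := hRε
  obtain ⟨B0, hB0⟩ := hRB.exists_norm_le
  set B := max B0 1 with hB_def
  have hBpos : (0:ℝ) < B := lt_of_lt_of_le one_pos (le_max_right _ _)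
  have hzB : ∀ z ∈ R, Complex.abs z ≤ B := fun z hz =>
    le_trans (le_trans (le_of_eq (Complex.norm_eq_abs z).symm) (hB0 z hz)) (le_max_left _ _)
  obtain ⟨M₁, hM₁0, hM₁⟩ := core ν νt hνpos hνtpos hνt0 c 1 hc one_pos ε B hε hBpos
  obtain ⟨M₂, hM₂0, hM₂⟩ := core νt ν hνtpos hνpos hν0 1 c one_pos hc ε B hε hBpos
  obtain ⟨τ1, hτ10, hτ11, hp1⟩ := exists_annulus ν hνpos hν0
  obtain ⟨τ2, hτ20, hτ21, hp2⟩ := exists_annulus νt hνtpos hνt0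
  -- pointwise data for z ∈ R
  have hdata : ∀ z ∈ R, 0 < z.im ∧ 0 < (δ z).im ∧ 0 < (δt z).im ∧
      (δ z = ((c:ℝ):ℂ) * ∫ t, (t:ℂ) / (-z * (1 + δt z * (t:ℂ))) ∂ν) ∧
      (δt z = (((1:ℝ)):ℂ) * ∫ t, (t:ℂ) / (-z * (1 + δ z * (t:ℂ))) ∂νt) := by
    intro z hzR
    have hz : 0 < z.im := hRU hzR
    obtain ⟨hd, he, heq1, heq2⟩ := hsol z hz
    refine ⟨hz, hd, he, heq1, ?_⟩
    rw [Complex.ofReal_one, one_mul]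
    exact heq2
  have key : ∀ z ∈ R, (∫ t, t^2 / Complex.normSq (1 + δt z * (t:ℂ)) ∂ν) ≤ M₁
      ∧ (∫ t, t^2 / Complex.normSq (1 + δ z * (t:ℂ)) ∂νt) ≤ M₂ := by
    intro z hzR
    obtain ⟨hz, hd, he, heq1, heq2⟩ := hdata z hzR
    exact ⟨hM₁ z (δ z) (δt z) hz (hεR z hzR) (hzB z hzR) hd he heq1 heq2,
      hM₂ z (δt z) (δ z) hz (hεR z hzR) (hzB z hzR) he hd heq2 heq1⟩
  -- modulus bounds
  have habs : ∀ z ∈ R, Complex.abs (δt z) ≤ Real.sqrt M₂ / ε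
      ∧ Complex.abs (δ z) ≤ c * Real.sqrt M₁ / ε := by
    intro z hzR
    obtain ⟨hz, hd, he, heq1, heq2⟩ := hdata z hzR
    have hzabs : ε ≤ Complex.abs z := le_trans (hεR z hzR) (Complex.abs_re_le_abs z)
    constructor
    · -- bound |δt z| via νt-integral
      have hvlb := annulus_lb (d := δ z) νt hd hτ20 hτ21
      have hdenpos : 0 < 1 + Complex.abs (δ z) * τ2⁻¹ :=
        add_pos_of_pos_of_nonneg one_pos
          (mul_nonneg (Complex.abs.nonneg _) (inv_nonneg.2 hτ20.le))
      have hvpos : 0 < ∫ t, t^2 / Complex.normSq (1 + δ z * (t:ℂ)) ∂νt :=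
        lt_of_lt_of_le (mul_pos hp2 (div_pos (pow_pos hτ20 2) (pow_pos hdenpos 2))) hvlb
      have h1 : Complex.abs (z * δt z)
          ≤ 1 * ∫ t, |t| / Complex.abs (1 + δ z * (t:ℂ)) ∂νt :=
        abs_ze_le νt hz hd 1 one_pos heq2
      have h2 := cs_bound νt hd hvpos
      have h3 : Real.sqrt (∫ t, t^2 / Complex.normSq (1 + δ z * (t:ℂ)) ∂νt)
          ≤ Real.sqrt M₂ := Real.sqrt_le_sqrt (key z hzR).2
      have h4 : Complex.abs (z * δt z) ≤ Real.sqrt M₂ := by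
        rw [one_mul] at h1
        exact le_trans h1 (le_trans h2 h3)
      rw [le_div_iff₀ hε]
      calc Complex.abs (δt z) * ε ≤ Complex.abs (δt z) * Complex.abs z := by
            have := Complex.abs.nonneg (δt z)
            gcongr
      _ = Complex.abs (z * δt z) := by rw [← map_mul, mul_comm]
      _ ≤ Real.sqrt M₂ := h4
    · have hulb := annulus_lb (d := δt z) ν he hτ10 hτ11
      have hdenpos : 0 < 1 + Complex.abs (δt z) * τ1⁻¹ :=
        add_pos_of_pos_of_nonneg one_pos
          (mul_nonneg (Complex.abs.nonneg _) (inv_nonneg.2 hτ10.le))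
      have hupos : 0 < ∫ t, t^2 / Complex.normSq (1 + δt z * (t:ℂ)) ∂ν :=
        lt_of_lt_of_le (mul_pos hp1 (div_pos (pow_pos hτ10 2) (pow_pos hdenpos 2))) hulb
      have h1 : Complex.abs (z * δ z)
          ≤ c * ∫ t, |t| / Complex.abs (1 + δt z * (t:ℂ)) ∂ν :=
        abs_ze_le ν hz he c hc heq1
      have h2 := cs_bound ν he hupos
      have h3 : Real.sqrt (∫ t, t^2 / Complex.normSq (1 + δt z * (t:ℂ)) ∂ν)
          ≤ Real.sqrt M₁ := Real.sqrt_le_sqrt (key z hzR).1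
      have h4 : Complex.abs (z * δ z) ≤ c * Real.sqrt M₁ :=
        le_trans h1 (mul_le_mul_of_nonneg_left (le_trans h2 h3) hc.le)
      rw [le_div_iff₀ hε]
      calc Complex.abs (δ z) * ε ≤ Complex.abs (δ z) * Complex.abs z := by
            have := Complex.abs.nonneg (δ z)
            gcongr
      _ = Complex.abs (z * δ z) := by rw [← map_mul, mul_comm]
      _ ≤ c * Real.sqrt M₁ := h4
  rcases hℓ with rfl | rfl
  · -- ℓ = 1
    constructor
    · refine ⟨M₁/2 + 2 + 2*(M₂/ε^2)*M₁, fun z hzR => ?_⟩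
      obtain ⟨hz, hd, he, heq1, heq2⟩ := hdata z hzR
      have hu1 : (∫ t, t^2 / Complex.normSq (1 + δt z * (t:ℂ)) ∂ν) ≤ M₁ := (key z hzR).1
      have hu0 : 0 ≤ ∫ t, t^2 / Complex.normSq (1 + δt z * (t:ℂ)) ∂ν :=
        integral_nonneg fun t => by
          have := normSq_pos' he t; positivity
      have hE2 : (Complex.abs (δt z))^2 ≤ M₂/ε^2 := by
        have h1 := (habs z hzR).1
        have h2 : (Real.sqrt M₂ / ε)^2 = M₂/ε^2 := by
          rw [div_pow, Real.sq_sqrt hM₂0]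
        rw [← h2]
        exact pow_le_pow_left₀ (Complex.abs.nonneg _) h1 2
      have hsle := s_le ν hνpos he
      have hmul : (Complex.abs (δt z))^2 * (∫ t, t^2 / Complex.normSq (1 + δt z * (t:ℂ)) ∂ν)
          ≤ (M₂/ε^2) * M₁ :=
        mul_le_mul hE2 hu1 hu0 (by positivity)
      calc ∫ t, t ^ 1 / ‖1 + δt z * (t : ℂ)‖ ^ 2 ∂ν
          = ∫ t, t / Complex.normSq (1 + δt z * (t:ℂ)) ∂ν := by
            refine integral_congr_ae (Eventually.of_forall fun t => ?_)
            show t ^ 1 / ‖1 + δt z * (t : ℂ)‖ ^ 2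
              = t / Complex.normSq (1 + δt z * (t:ℂ))
            rw [pow_one, Complex.sq_norm]
      _ ≤ (∫ t, t^2 / Complex.normSq (1 + δt z * (t:ℂ)) ∂ν)/2 + 2
            + 2*(Complex.abs (δt z))^2 * ∫ t, t^2 / Complex.normSq (1 + δt z * (t:ℂ)) ∂ν := hsle
      _ ≤ M₁/2 + 2 + 2*(M₂/ε^2)*M₁ := by nlinarith [hmul, hu1]
    · refine ⟨M₂/2 + 2 + 2*((c * Real.sqrt M₁ / ε)^2)*M₂, fun z hzR => ?_⟩
      obtain ⟨hz, hd, he, heq1, heq2⟩ := hdata z hzR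
      have hv1 : (∫ t, t^2 / Complex.normSq (1 + δ z * (t:ℂ)) ∂νt) ≤ M₂ := (key z hzR).2
      have hv0 : 0 ≤ ∫ t, t^2 / Complex.normSq (1 + δ z * (t:ℂ)) ∂νt :=
        integral_nonneg fun t => by
          have := normSq_pos' hd t; positivity
      have hE2 : (Complex.abs (δ z))^2 ≤ (c * Real.sqrt M₁ / ε)^2 :=
        pow_le_pow_left₀ (Complex.abs.nonneg _) (habs z hzR).2 2
      have hsle := s_le νt hνtpos hd
      have hmul : (Complex.abs (δ z))^2 * (∫ t, t^2 / Complex.normSq (1 + δ z * (t:ℂ)) ∂νt)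
          ≤ ((c * Real.sqrt M₁ / ε)^2) * M₂ :=
        mul_le_mul hE2 hv1 hv0 (by positivity)
      calc ∫ t, t ^ 1 / ‖1 + δ z * (t : ℂ)‖ ^ 2 ∂νt
          = ∫ t, t / Complex.normSq (1 + δ z * (t:ℂ)) ∂νt := by
            refine integral_congr_ae (Eventually.of_forall fun t => ?_)
            show t ^ 1 / ‖1 + δ z * (t : ℂ)‖ ^ 2
              = t / Complex.normSq (1 + δ z * (t:ℂ))
            rw [pow_one, Complex.sq_norm]
      _ ≤ (∫ t, t^2 / Complex.normSq (1 + δ z * (t:ℂ)) ∂νt)/2 + 2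
            + 2*(Complex.abs (δ z))^2 * ∫ t, t^2 / Complex.normSq (1 + δ z * (t:ℂ)) ∂νt := hsle
      _ ≤ M₂/2 + 2 + 2*((c * Real.sqrt M₁ / ε)^2)*M₂ := by nlinarith [hmul, hv1]
  · -- ℓ = 2
    constructor
    · refine ⟨M₁, fun z hzR => ?_⟩
      have h1 := (key z hzR).1
      calc ∫ t, t ^ 2 / ‖1 + δt z * (t : ℂ)‖ ^ 2 ∂ν
          = ∫ t, t^2 / Complex.normSq (1 + δt z * (t:ℂ)) ∂ν := by
            refine integral_congr_ae (Eventually.of_forall fun t => ?_)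
            show t ^ 2 / ‖1 + δt z * (t : ℂ)‖ ^ 2
              = t ^ 2 / Complex.normSq (1 + δt z * (t:ℂ))
            rw [Complex.sq_norm]
      _ ≤ M₁ := h1
    · refine ⟨M₂, fun z hzR => ?_⟩
      have h1 := (key z hzR).2
      calc ∫ t, t ^ 2 / ‖1 + δ z * (t : ℂ)‖ ^ 2 ∂νt
          = ∫ t, t^2 / Complex.normSq (1 + δ z * (t:ℂ)) ∂νt := by
            refine integral_congr_ae (Eventually.of_forall fun t => ?_)
            show t ^ 2 / ‖1 + δ z * (t : ℂ)‖ ^ 2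
              = t ^ 2 / Complex.normSq (1 + δ z * (t:ℂ))
            rw [Complex.sq_norm]
      _ ≤ M₂ := h1

end
end

section
/- Let (d̃₁, d₁, x₁) and (d̃₂, d₂, x₂) both be admissible triples. If d̃₁ ≠ d̃₂ then x₁ ≠ x₂, and if d₁ ≠ d₂ then x₁ ≠ x₂. -/
open MeasureTheory Set Filter Topology

noncomputable section

/-- The topological support of a measure on `ℝ`: the set of points all of whose open
neighborhoods have positive measure. -/
def msupport (μ : Measure ℝ) : Set ℝ := {x | ∀ U : Set ℝ, IsOpen U → x ∈ U → μ U ≠ 0}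

open Classical in
/-- The set `𝒟` associated with the measure `νt`. -/
def calD (νt : Measure ℝ) : Set ℝ :=
  {d | d ≠ 0 ∧ -d⁻¹ ∉ msupport νt} ∪ (if IsCompact (msupport νt) then {0} else ∅)

open Classical in
/-- The set `𝒟̃` associated with the measure `ν`. -/
def calDt (ν : Measure ℝ) : Set ℝ :=
  {d | d ≠ 0 ∧ -d⁻¹ ∉ msupport ν} ∪ (if IsCompact (msupport ν) then {0} else ∅)

/-- `γ(x, d̃) = c ∫ t²/(x²(1+d̃t)²) dν(t)`. -/
def gam (ν : Measure ℝ) (c x dt : ℝ) : ℝ := c * ∫ t, t ^ 2 / (x ^ 2 * (1 + dt * t) ^ 2) ∂ν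

/-- `γ̃(x, d) = ∫ t²/(x²(1+dt)²) dν̃(t)`. -/
def gamt (νt : Measure ℝ) (x d : ℝ) : ℝ := ∫ t, t ^ 2 / (x ^ 2 * (1 + d * t) ^ 2) ∂νt

/-- The triple `(d̃, d, x)` is admissible: `d̃ ∈ 𝒟̃`, `d ∈ 𝒟`, `x ≠ 0`, the master system
holds at `(d̃, d, x)`, and `1 - x² γ(x,d̃) γ̃(x,d) > 0`. -/
def Admissible (ν νt : Measure ℝ) (c : ℝ) (dt d x : ℝ) : Prop :=
  dt ∈ calDt ν ∧ d ∈ calD νt ∧ x ≠ 0 ∧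
  d = c * ∫ t, t / (-x * (1 + dt * t)) ∂ν ∧
  dt = ∫ t, t / (-x * (1 + d * t)) ∂νt ∧
  0 < 1 - x ^ 2 * gam ν c x dt * gamt νt x d

/-! ### Auxiliary lemmas -/

lemma msupport_isClosed' (μ : Measure ℝ) : IsClosed (msupport μ) := by
  rw [← isOpen_compl_iff, isOpen_iff_mem_nhds]
  intro x hx
  simp only [msupport, mem_compl_iff, mem_setOf_eq] at hx
  push_neg at hx
  obtain ⟨U, hUo, hxU, hU0⟩ := hx
  refine Filter.mem_of_superset (hUo.mem_nhds hxU) ?_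
  intro y hy
  simp only [msupport, mem_compl_iff, mem_setOf_eq]
  push_neg
  exact ⟨U, hUo, hy, hU0⟩

lemma msupport_compl_null' (μ : Measure ℝ) : μ (msupport μ)ᶜ = 0 := by
  apply measure_null_of_locally_null
  intro x hx
  simp only [msupport, mem_compl_iff, mem_setOf_eq] at hx
  push_neg at hx
  obtain ⟨U, hUo, hxU, hU0⟩ := hx
  exact ⟨U, mem_nhdsWithin_of_mem_nhds (hUo.mem_nhds hxU), hU0⟩

lemma ae_mem_msupport' (μ : Measure ℝ) : ∀ᵐ t ∂μ, t ∈ msupport μ := by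
  rw [ae_iff]
  exact msupport_compl_null' μ

lemma calD_eq_calDt' (μ : Measure ℝ) : calD μ = calDt μ := rfl

lemma calDt_bound' {μ : Measure ℝ} {a : ℝ} (ha : a ∈ calDt μ) :
    ∃ C : ℝ, 0 ≤ C ∧ ∀ t ∈ msupport μ, 1 + a * t ≠ 0 ∧ |t / (1 + a * t)| ≤ C := by
  rcases ha with ⟨hane, hns⟩ | h
  · have hopen : IsOpen (msupport μ)ᶜ := (msupport_isClosed' μ).isOpen_compl
    obtain ⟨ε, hε, hball⟩ := Metric.isOpen_iff.1 hopen _ hns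
    refine ⟨(1 + |a⁻¹| / ε) / |a|, by positivity, fun t ht => ?_⟩
    have hd : ε ≤ |t + a⁻¹| := by
      by_contra hlt
      push_neg at hlt
      have : t ∈ Metric.ball (-a⁻¹) ε := by
        simp only [Metric.mem_ball, Real.dist_eq]
        rw [sub_neg_eq_add]
        exact hlt
      exact hball this ht
    have habs : |a| > 0 := abs_pos.2 hane
    have hfac : 1 + a * t = a * (t + a⁻¹) := by field_simp; ring
    have hne : 1 + a * t ≠ 0 := by
      rw [hfac]
      exact mul_ne_zero hane (by intro h0; rw [h0] at hd; simp at hd; linarith)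
    refine ⟨hne, ?_⟩
    rw [abs_div, hfac, abs_mul]
    have hs : (0:ℝ) < |t + a⁻¹| := lt_of_lt_of_le hε hd
    rw [div_le_div_iff₀ (mul_pos habs hs) habs]
    have h1 : |t| ≤ |t + a⁻¹| + |a⁻¹| := by
      have := abs_add_le (t + a⁻¹) (-a⁻¹)
      simpa using this
    have h2 : |a⁻¹| ≤ (|a⁻¹| / ε) * |t + a⁻¹| := by
      rw [div_mul_eq_mul_div, le_div_iff₀ hε]
      nlinarith [abs_nonneg a⁻¹]
    nlinarith [abs_nonneg (t + a⁻¹), abs_nonneg t]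
  · have hc : IsCompact (msupport μ) ∧ a = 0 := by
      by_cases hP : IsCompact (msupport μ)
      · simp [hP] at h; exact ⟨hP, h⟩
      · simp [hP] at h
    obtain ⟨hcomp, rfl⟩ := hc
    obtain ⟨C, hC⟩ := isBounded_iff_forall_norm_le.1 hcomp.isBounded
    refine ⟨max C 0, le_max_right _ _, fun t ht => ?_⟩
    constructor
    · norm_num
    · simp only [zero_mul, add_zero, div_one]
      exact le_trans (by simpa [Real.norm_eq_abs] using hC t ht) (le_max_left _ _)

lemma cs_integral' {μ : Measure ℝ} (f g : ℝ → ℝ) (hf : MemLp f 2 μ) (hg : MemLp g 2 μ) :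
    (∫ t, f t * g t ∂μ) ^ 2 ≤ (∫ t, f t ^ 2 ∂μ) * (∫ t, g t ^ 2 ∂μ) := by
  have h2 : (2 : ℝ).HolderConjugate 2 := Real.HolderConjugate.two_two
  have hf' : MemLp f (ENNReal.ofReal 2) μ := by convert hf using 2; norm_num
  have hg' : MemLp g (ENNReal.ofReal 2) μ := by convert hg using 2; norm_num
  have key := MeasureTheory.integral_mul_norm_le_Lp_mul_Lq h2 hf' hg'
  have habs : |∫ t, f t * g t ∂μ| ≤ ∫ t, ‖f t‖ * ‖g t‖ ∂μ := by
    calc |∫ t, f t * g t ∂μ| ≤ ∫ t, ‖f t * g t‖ ∂μ := by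
          simpa [Real.norm_eq_abs] using norm_integral_le_integral_norm (fun t => f t * g t) (μ := μ)
      _ = ∫ t, ‖f t‖ * ‖g t‖ ∂μ := by simp [norm_mul]
  have hfsq : ∫ t, ‖f t‖ ^ (2:ℝ) ∂μ = ∫ t, f t ^ 2 ∂μ := by
    congr 1; funext t
    rw [show ((2:ℝ)) = ((2:ℕ):ℝ) by norm_num, Real.rpow_natCast]
    simp [Real.norm_eq_abs, sq_abs]
  have hgsq : ∫ t, ‖g t‖ ^ (2:ℝ) ∂μ = ∫ t, g t ^ 2 ∂μ := by
    congr 1; funext t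
    rw [show ((2:ℝ)) = ((2:ℕ):ℝ) by norm_num, Real.rpow_natCast]
    simp [Real.norm_eq_abs, sq_abs]
  rw [hfsq, hgsq] at key
  have hF : 0 ≤ ∫ t, f t ^ 2 ∂μ := integral_nonneg fun t => sq_nonneg _
  have hG : 0 ≤ ∫ t, g t ^ 2 ∂μ := integral_nonneg fun t => sq_nonneg _
  have h3 : |∫ t, f t * g t ∂μ| ≤ (∫ t, f t ^ 2 ∂μ) ^ ((1:ℝ)/2) * (∫ t, g t ^ 2 ∂μ) ^ ((1:ℝ)/2) :=
    habs.trans key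
  have hsq := mul_self_le_mul_self (abs_nonneg _) h3
  calc (∫ t, f t * g t ∂μ) ^ 2 = |∫ t, f t * g t ∂μ| * |∫ t, f t * g t ∂μ| := by
        rw [← abs_mul, abs_mul_self]; ring
    _ ≤ ((∫ t, f t ^ 2 ∂μ) ^ ((1:ℝ)/2) * (∫ t, g t ^ 2 ∂μ) ^ ((1:ℝ)/2)) *
        ((∫ t, f t ^ 2 ∂μ) ^ ((1:ℝ)/2) * (∫ t, g t ^ 2 ∂μ) ^ ((1:ℝ)/2)) := hsq
    _ = (∫ t, f t ^ 2 ∂μ) * (∫ t, g t ^ 2 ∂μ) := by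
        rw [mul_mul_mul_comm, ← Real.rpow_add' hF (by norm_num), ← Real.rpow_add' hG (by norm_num)]
        norm_num

lemma memℒp_of_msupport_bound' {μ : Measure ℝ} [IsProbabilityMeasure μ] {f : ℝ → ℝ}
    (hf : AEStronglyMeasurable f μ) {C : ℝ} (h : ∀ t ∈ msupport μ, |f t| ≤ C) (p : ENNReal) :
    MemLp f p μ := by
  refine MemLp.of_bound hf C ?_
  filter_upwards [ae_mem_msupport' μ] with t ht
  simpa [Real.norm_eq_abs] using h t ht

set_option maxHeartbeats 1000000 in
/-- Uniqueness of admissible solutions with the same `x`. -/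
lemma admissible_unique' (ν νt : Measure ℝ) [IsProbabilityMeasure ν] [IsProbabilityMeasure νt]
    (c : ℝ) (hc : 0 < c) (dt₁ d₁ dt₂ d₂ x : ℝ)
    (h₁ : Admissible ν νt c dt₁ d₁ x) (h₂ : Admissible ν νt c dt₂ d₂ x) :
    dt₁ = dt₂ ∧ d₁ = d₂ := by
  obtain ⟨hdt₁D, hd₁D, hx, he₁, hf₁, hpos₁⟩ := h₁
  obtain ⟨hdt₂D, hd₂D, -, he₂, hf₂, hpos₂⟩ := h₂
  rw [calD_eq_calDt'] at hd₁D hd₂D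
  obtain ⟨A₁, hA₁0, hA₁⟩ := calDt_bound' hdt₁D
  obtain ⟨A₂, hA₂0, hA₂⟩ := calDt_bound' hdt₂D
  obtain ⟨B₁, hB₁0, hB₁⟩ := calDt_bound' hd₁D
  obtain ⟨B₂, hB₂0, hB₂⟩ := calDt_bound' hd₂D
  set G : ℝ → ℝ → ℝ := fun a t => t / (1 + a * t) with hG
  have measG : ∀ a : ℝ, Measurable (G a) := fun a =>
    measurable_id.div (measurable_const.add (measurable_id.const_mul a))
  have mA₁ : ∀ p, MemLp (G dt₁) p ν := fun p =>
    memℒp_of_msupport_bound' (measG dt₁).aestronglyMeasurable (fun t ht => (hA₁ t ht).2) p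
  have mA₂ : ∀ p, MemLp (G dt₂) p ν := fun p =>
    memℒp_of_msupport_bound' (measG dt₂).aestronglyMeasurable (fun t ht => (hA₂ t ht).2) p
  have mB₁ : ∀ p, MemLp (G d₁) p νt := fun p =>
    memℒp_of_msupport_bound' (measG d₁).aestronglyMeasurable (fun t ht => (hB₁ t ht).2) p
  have mB₂ : ∀ p, MemLp (G d₂) p νt := fun p =>
    memℒp_of_msupport_bound' (measG d₂).aestronglyMeasurable (fun t ht => (hB₂ t ht).2) p
  have intA₁ : Integrable (G dt₁) ν := memLp_one_iff_integrable.1 (mA₁ 1)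
  have intA₂ : Integrable (G dt₂) ν := memLp_one_iff_integrable.1 (mA₂ 1)
  have intB₁ : Integrable (G d₁) νt := memLp_one_iff_integrable.1 (mB₁ 1)
  have intB₂ : Integrable (G d₂) νt := memLp_one_iff_integrable.1 (mB₂ 1)
  have intPA : Integrable (fun t => G dt₁ t * G dt₂ t) ν := by
    refine memLp_one_iff_integrable.1 (memℒp_of_msupport_bound'
      ((measG dt₁).mul (measG dt₂)).aestronglyMeasurable (C := A₁ * A₂) (fun t ht => ?_) 1)
    rw [Pi.mul_apply, abs_mul]
    exact mul_le_mul (hA₁ t ht).2 (hA₂ t ht).2 (abs_nonneg _) hA₁0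
  have intPB : Integrable (fun t => G d₁ t * G d₂ t) νt := by
    refine memLp_one_iff_integrable.1 (memℒp_of_msupport_bound'
      ((measG d₁).mul (measG d₂)).aestronglyMeasurable (C := B₁ * B₂) (fun t ht => ?_) 1)
    rw [Pi.mul_apply, abs_mul]
    exact mul_le_mul (hB₁ t ht).2 (hB₂ t ht).2 (abs_nonneg _) hB₁0
  -- rewrite of the master integrals
  have hrw : ∀ (μ : Measure ℝ) (a : ℝ),
      (∫ t, t / (-x * (1 + a * t)) ∂μ) = (-x)⁻¹ * ∫ t, G a t ∂μ := by
    intro μ a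
    rw [← integral_const_mul]
    congr 1; funext t
    simp only [hG, div_eq_mul_inv, mul_inv]
    ring
  set P : ℝ := ∫ t, G dt₁ t * G dt₂ t ∂ν with hP
  set Q : ℝ := ∫ t, G d₁ t * G d₂ t ∂νt with hQ
  have hsubA : (∫ t, G dt₁ t ∂ν) - ∫ t, G dt₂ t ∂ν = (dt₂ - dt₁) * P := by
    rw [hP, ← integral_sub intA₁ intA₂, ← integral_const_mul]
    apply integral_congr_ae
    filter_upwards [ae_mem_msupport' ν] with t ht
    have h1 := (hA₁ t ht).1
    have h2 := (hA₂ t ht).1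
    simp only [hG]
    rw [div_sub_div _ _ h1 h2, div_mul_div_comm, mul_div_assoc']
    congr 1
    ring
  have hsubB : (∫ t, G d₁ t ∂νt) - ∫ t, G d₂ t ∂νt = (d₂ - d₁) * Q := by
    rw [hQ, ← integral_sub intB₁ intB₂, ← integral_const_mul]
    apply integral_congr_ae
    filter_upwards [ae_mem_msupport' νt] with t ht
    have h1 := (hB₁ t ht).1
    have h2 := (hB₂ t ht).1
    simp only [hG]
    rw [div_sub_div _ _ h1 h2, div_mul_div_comm, mul_div_assoc']
    congr 1
    ring
  have hdiff₁ : d₁ - d₂ = c * (-x)⁻¹ * ((dt₂ - dt₁) * P) := by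
    rw [he₁, he₂, hrw ν dt₁, hrw ν dt₂]
    linear_combination (c * (-x)⁻¹) * hsubA
  have hdiff₂ : dt₁ - dt₂ = (-x)⁻¹ * ((d₂ - d₁) * Q) := by
    rw [hf₁, hf₂, hrw νt d₁, hrw νt d₂]
    linear_combination (-x)⁻¹ * hsubB
  -- gamma rewrites
  have hgam : ∀ (μ : Measure ℝ) (a : ℝ),
      (∫ t, t ^ 2 / (x ^ 2 * (1 + a * t) ^ 2) ∂μ) = x⁻¹ * x⁻¹ * ∫ t, (G a t) ^ 2 ∂μ := by
    intro μ a
    rw [← integral_const_mul]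
    congr 1; funext t
    simp only [hG, div_eq_mul_inv, mul_pow, mul_inv, pow_two]
    ring
  set J₁ : ℝ := ∫ t, (G dt₁ t) ^ 2 ∂ν with hJ₁def
  set J₂ : ℝ := ∫ t, (G dt₂ t) ^ 2 ∂ν with hJ₂def
  set K₁ : ℝ := ∫ t, (G d₁ t) ^ 2 ∂νt with hK₁def
  set K₂ : ℝ := ∫ t, (G d₂ t) ^ 2 ∂νt with hK₂def
  have hxx : x * x⁻¹ = 1 := mul_inv_cancel₀ hx
  have hlt₁ : c * (x⁻¹ * x⁻¹) * (J₁ * K₁) < 1 := by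
    rw [gam, gamt, hgam ν dt₁, hgam νt d₁, ← hJ₁def, ← hK₁def] at hpos₁
    have e₁ : x ^ 2 * (c * (x⁻¹ * x⁻¹ * J₁)) * (x⁻¹ * x⁻¹ * K₁) = c * (x⁻¹ * x⁻¹) * (J₁ * K₁) := by
      field_simp
    linarith [hpos₁, e₁]
  have hlt₂ : c * (x⁻¹ * x⁻¹) * (J₂ * K₂) < 1 := by
    rw [gam, gamt, hgam ν dt₂, hgam νt d₂, ← hJ₂def, ← hK₂def] at hpos₂
    have e₂ : x ^ 2 * (c * (x⁻¹ * x⁻¹ * J₂)) * (x⁻¹ * x⁻¹ * K₂) = c * (x⁻¹ * x⁻¹) * (J₂ * K₂) := by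
      field_simp
    linarith [hpos₂, e₂]
  have hJ₁n : 0 ≤ J₁ := integral_nonneg fun t => sq_nonneg _
  have hJ₂n : 0 ≤ J₂ := integral_nonneg fun t => sq_nonneg _
  have hK₁n : 0 ≤ K₁ := integral_nonneg fun t => sq_nonneg _
  have hK₂n : 0 ≤ K₂ := integral_nonneg fun t => sq_nonneg _
  have hβ : (0:ℝ) ≤ x⁻¹ * x⁻¹ := mul_self_nonneg _
  have hP2 : P ^ 2 ≤ J₁ * J₂ := cs_integral' _ _ (mA₁ 2) (mA₂ 2)
  have hQ2 : Q ^ 2 ≤ K₁ * K₂ := cs_integral' _ _ (mB₁ 2) (mB₂ 2)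
  have hu : (dt₁ - dt₂) * (1 - c * (x⁻¹ * x⁻¹) * (P * Q)) = 0 := by
    linear_combination hdiff₂ + (-(-x)⁻¹ * Q) * hdiff₁
  have hdt : dt₁ = dt₂ := by
    rcases mul_eq_zero.1 hu with h | h
    · exact sub_eq_zero.1 h
    · exfalso
      have hκ : c * (x⁻¹ * x⁻¹) * (P * Q) = 1 := by linarith
      have hPQ2 : (P * Q) ^ 2 ≤ (J₁ * J₂) * (K₁ * K₂) := by
        rw [mul_pow]
        exact mul_le_mul hP2 hQ2 (sq_nonneg Q) (mul_nonneg hJ₁n hJ₂n)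
      have h2' : (c * (x⁻¹ * x⁻¹)) ^ 2 * ((P * Q) ^ 2) ≤
          (c * (x⁻¹ * x⁻¹) * (J₁ * K₁)) * (c * (x⁻¹ * x⁻¹) * (J₂ * K₂)) := by
        nlinarith [hPQ2, sq_nonneg (c * (x⁻¹ * x⁻¹))]
      have hn₁ : 0 ≤ c * (x⁻¹ * x⁻¹) * (J₁ * K₁) :=
        mul_nonneg (mul_nonneg hc.le hβ) (mul_nonneg hJ₁n hK₁n)
      have hprod : (c * (x⁻¹ * x⁻¹) * (J₁ * K₁)) * (c * (x⁻¹ * x⁻¹) * (J₂ * K₂)) < 1 :=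
        lt_of_le_of_lt (mul_le_of_le_one_right hn₁ hlt₂.le) hlt₁
      have hone : (1:ℝ) = (c * (x⁻¹ * x⁻¹)) ^ 2 * ((P * Q) ^ 2) := by
        rw [← mul_pow, hκ]; norm_num
      linarith
  refine ⟨hdt, ?_⟩
  rw [he₁, he₂, hdt]

theorem stmt13 (ν νt : Measure ℝ) [IsProbabilityMeasure ν] [IsProbabilityMeasure νt]
    (hνpos : ν (Set.Iio (0 : ℝ)) = 0) (hνtpos : νt (Set.Iio (0 : ℝ)) = 0)
    (hν0 : ν ≠ Measure.dirac 0) (hνt0 : νt ≠ Measure.dirac 0)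
    (c : ℝ) (hc : 0 < c)
    (dt₁ d₁ x₁ dt₂ d₂ x₂ : ℝ)
    (hadm₁ : Admissible ν νt c dt₁ d₁ x₁) (hadm₂ : Admissible ν νt c dt₂ d₂ x₂) :
    (dt₁ ≠ dt₂ → x₁ ≠ x₂) ∧ (d₁ ≠ d₂ → x₁ ≠ x₂) := by
  constructor
  · intro hne heq
    exact hne (admissible_unique' ν νt c hc dt₁ d₁ dt₂ d₂ x₂ (heq ▸ hadm₁) hadm₂).1
  · intro hne heq
    exact hne (admissible_unique' ν νt c hc dt₁ d₁ dt₂ d₂ x₂ (heq ▸ hadm₁) hadm₂).2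
end
end
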